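/- arXiv:1201.4375 — 3 statements merged into one kernel-verified Lean document; each statement's English description precedes it below -/
import Mathlib

section
/- For all integers n and k with n - k ≥ k ≥ 1, SP(n, k) ≥ k · SP(n-k, k); that is, from any Sperner k-partition system on an (n-k)-element set one obtains a Sperner k-partition system on an n-element set that is k times as large. -/
open Finset

/-- `P` is a partition of the finite set `X` into exactly `k` nonempty classes. -/
def IsPartitionInto {α : Type*} [DecidableEq α] (X : Finset α) (k : ℕ)
    (P : Finset (Finset α)) : Prop :=
  P.card = k ∧ (∀ A ∈ P, A.Nonempty) ∧ (∀ A ∈ P, A ⊆ X) ∧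
    ∀ x ∈ X, ∃! A, A ∈ P ∧ x ∈ A

/-- `Sys` is a Sperner `k`-partition system on the finite set `X`: every member is a
`k`-partition of `X` and no class of one partition is contained in a class of a
different partition of the system. -/
def IsSpernerPartitionSystem {α : Type*} [DecidableEq α] (X : Finset α) (k : ℕ)
    (Sys : Finset (Finset (Finset α))) : Prop :=
  (∀ P ∈ Sys, IsPartitionInto X k P) ∧
    ∀ P ∈ Sys, ∀ Q ∈ Sys, P ≠ Q → ∀ A ∈ P, ∀ B ∈ Q, ¬ A ⊆ B

/-- `SP n k` is the maximum number of partitions in a Sperner `k`-partition system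
on an `n`-element set. -/
noncomputable def SP (n k : ℕ) : ℕ :=
  sSup {m | ∃ Sys : Finset (Finset (Finset (Fin n))),
    IsSpernerPartitionSystem Finset.univ k Sys ∧ Sys.card = m}

namespace SPAux

variable {m k : ℕ}

/-- the `t % k`-th new element of `Fin (m + k)`. -/
def yv (m k : ℕ) (hk : 0 < k) (t : ℕ) : Fin (m + k) :=
  ⟨m + t % k, by have := Nat.mod_lt t hk; omega⟩

lemma yv_mod (hk : 0 < k) {t t' : ℕ} (h : yv m k hk t = yv m k hk t') : t % k = t' % k := by
  simpa [yv, Fin.ext_iff] using h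

/-- lift a set of `Fin m` to `Fin (m + k)`. -/
def lf (m k : ℕ) (A : Finset (Fin m)) : Finset (Fin (m + k)) :=
  A.map (Fin.castAddEmb k)

lemma mem_lf {A : Finset (Fin m)} {x : Fin (m + k)} :
    x ∈ lf m k A ↔ ∃ a ∈ A, (a : ℕ) = (x : ℕ) := by
  simp [lf, Fin.ext_iff, Fin.castAddEmb]

lemma lf_val_lt {A : Finset (Fin m)} {x : Fin (m + k)} (hx : x ∈ lf m k A) : (x : ℕ) < m := by
  obtain ⟨a, -, ha⟩ := mem_lf.1 hx
  have := a.isLt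
  omega

lemma yv_not_mem_lf (hk : 0 < k) {A : Finset (Fin m)} (t : ℕ) :
    yv m k hk t ∉ lf m k A := by
  intro h
  have := lf_val_lt h
  simp [yv] at this

/-- the class of `A` in the new partition with shift `j`. -/
noncomputable def cls (hk : 0 < k) (P : Finset (Finset (Fin m))) (j : ℕ) (A : {x // x ∈ P}) :
    Finset (Fin (m + k)) :=
  lf m k A.1 ∪ {yv m k hk ((P.equivFin A : ℕ) + j)}

/-- the new partition obtained from `P` with shift `j`. -/
noncomputable def newPart (hk : 0 < k) (P : Finset (Finset (Fin m))) (j : ℕ) :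
    Finset (Finset (Fin (m + k))) :=
  P.attach.image (cls hk P j)

lemma sub_of_cls_sub {hk : 0 < k} {P Q : Finset (Finset (Fin m))} {j j' : ℕ}
    {A : {x // x ∈ P}} {B : {x // x ∈ Q}}
    (h : cls hk P j A ⊆ cls hk Q j' B) : A.1 ⊆ B.1 := by
  intro a ha
  have hmem : (⟨(a : ℕ), by have := a.isLt; omega⟩ : Fin (m + k)) ∈ cls hk P j A :=
    mem_union_left _ (mem_lf.2 ⟨a, ha, rfl⟩)
  rcases mem_union.1 (h hmem) with hx | hx
  · obtain ⟨b, hb, hb'⟩ := mem_lf.1 hx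
    have : b = a := Fin.ext hb'
    exact this ▸ hb
  · have := mem_singleton.1 hx
    have hv : (a : ℕ) = m + ((Q.equivFin B : ℕ) + j') % k := by
      simpa [yv, Fin.ext_iff] using this
    have := a.isLt
    omega

lemma cls_inj (hk : 0 < k) (P : Finset (Finset (Fin m))) (j : ℕ) {A B : {x // x ∈ P}}
    (h : cls hk P j A = cls hk P j B) : A = B :=
  Subtype.ext (Finset.Subset.antisymm (sub_of_cls_sub h.le) (sub_of_cls_sub h.ge))

lemma newPart_isPartition (hk : 0 < k) {P : Finset (Finset (Fin m))}
    (hP : IsPartitionInto (univ : Finset (Fin m)) k P) (j : ℕ) :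
    IsPartitionInto (univ : Finset (Fin (m + k))) k (newPart hk P j) := by
  obtain ⟨hcard, hne, -, huniq⟩ := hP
  refine ⟨?_, ?_, fun _ _ => subset_univ _, ?_⟩
  · rw [newPart, card_image_of_injOn (fun A _ B _ h => cls_inj hk P j h), card_attach, hcard]
  · rintro C hC
    rw [newPart, mem_image] at hC
    obtain ⟨A, -, rfl⟩ := hC
    exact ⟨_, mem_union_right _ (mem_singleton_self _)⟩
  · intro x _
    rw [newPart]
    by_cases hx : (x : ℕ) < m
    · -- low case
      set x0 : Fin m := ⟨(x : ℕ), hx⟩ with hx0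
      obtain ⟨A, ⟨hAP, hx0A⟩, hA!⟩ := huniq x0 (mem_univ _)
      refine ⟨cls hk P j ⟨A, hAP⟩,
        ⟨mem_image_of_mem _ (mem_attach _ _), mem_union_left _ (mem_lf.2 ⟨x0, hx0A, rfl⟩)⟩, ?_⟩
      rintro C ⟨hC, hxC⟩
      rw [mem_image] at hC
      obtain ⟨B, -, rfl⟩ := hC
      rcases mem_union.1 hxC with h | h
      · obtain ⟨b, hbB, hbx⟩ := mem_lf.1 h
        have hb0 : b = x0 := Fin.ext hbx
        have : B.1 = A := hA! B.1 ⟨B.2, hb0 ▸ hbB⟩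
        congr 1
        exact Subtype.ext this
      · exfalso
        have := mem_singleton.1 h
        have : (x : ℕ) = m + ((P.equivFin B : ℕ) + j) % k := by
          simpa [yv, Fin.ext_iff] using this
        omega
    · -- high case
      push_neg at hx
      have ht : (x : ℕ) - m < k := by have := x.isLt; omega
      -- the map A ↦ (idx A + j) % k is a bijection from ↥P to Fin k
      have hkP : P.card = k := hcard
      let g : {a // a ∈ P} → Fin k := fun A => ⟨((P.equivFin A : ℕ) + j) % k, Nat.mod_lt _ hk⟩
      have hginj : Function.Injective g := by
        intro A B hAB
        have h1 : ((P.equivFin A : ℕ) + j) % k = ((P.equivFin B : ℕ) + j) % k := by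
          simpa [g, Fin.ext_iff] using hAB
        have h2 : (P.equivFin A : ℕ) % k = (P.equivFin B : ℕ) % k :=
          Nat.ModEq.add_right_cancel' j h1
        have hA' : (P.equivFin A : ℕ) < k := hkP ▸ (P.equivFin A).isLt
        have hB' : (P.equivFin B : ℕ) < k := hkP ▸ (P.equivFin B).isLt
        rw [Nat.mod_eq_of_lt hA', Nat.mod_eq_of_lt hB'] at h2
        exact P.equivFin.injective (Fin.ext h2)
      have hgbij : Function.Bijective g :=
        (Fintype.bijective_iff_injective_and_card g).2 ⟨hginj, by simp [hkP]⟩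
      obtain ⟨A, hA⟩ := hgbij.2 ⟨(x : ℕ) - m, ht⟩
      have hAval : ((P.equivFin A : ℕ) + j) % k = (x : ℕ) - m := by
        simpa [g, Fin.ext_iff] using hA
      have hxy : x = yv m k hk ((P.equivFin A : ℕ) + j) := by
        have := x.isLt
        simp only [yv, Fin.ext_iff, hAval]
        omega
      refine ⟨cls hk P j A,
        ⟨mem_image_of_mem _ (mem_attach _ _), by
          rw [hxy]; exact mem_union_right _ (mem_singleton_self _)⟩, ?_⟩
      rintro C ⟨hC, hxC⟩
      rw [mem_image] at hC
      obtain ⟨B, -, rfl⟩ := hC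
      rcases mem_union.1 hxC with h | h
      · exact absurd (lf_val_lt h) (by omega)
      · have hB : x = yv m k hk ((P.equivFin B : ℕ) + j) := mem_singleton.1 h
        have hmod : ((P.equivFin B : ℕ) + j) % k = ((P.equivFin A : ℕ) + j) % k :=
          yv_mod hk (hB.symm.trans hxy)
        have : B = A := hginj (Fin.ext hmod)
        rw [this]

lemma cross (hk : 0 < k) {P Q : Finset (Finset (Fin m))}
    (hP : IsPartitionInto (univ : Finset (Fin m)) k P)
    (hSper : P ≠ Q → ∀ A ∈ P, ∀ B ∈ Q, ¬ A ⊆ B)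
    {j j' : ℕ} (hj : j < k) (hj' : j' < k)
    (hne : P ≠ Q ∨ j ≠ j') :
    ∀ C ∈ newPart hk P j, ∀ D ∈ newPart hk Q j', ¬ C ⊆ D := by
  rintro C hC D hD hsub
  rw [newPart, mem_image] at hC hD
  obtain ⟨A, -, rfl⟩ := hC
  obtain ⟨B, -, rfl⟩ := hD
  have hAB : A.1 ⊆ B.1 := sub_of_cls_sub hsub
  by_cases hPQ : P = Q
  · subst hPQ
    have hjj : j ≠ j' := hne.resolve_left (fun h => h rfl)
    -- A = B by uniqueness within the partition P
    obtain ⟨a, ha⟩ := hP.2.1 A.1 A.2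
    obtain ⟨E, -, hE!⟩ := hP.2.2.2 a (mem_univ _)
    have h1 : A.1 = E := hE! A.1 ⟨A.2, ha⟩
    have h2 : B.1 = E := hE! B.1 ⟨B.2, hAB ha⟩
    have hABeq : A = B := Subtype.ext (h1.trans h2.symm)
    subst hABeq
    have hy : yv m k hk ((P.equivFin A : ℕ) + j) ∈ cls hk P j' A :=
      hsub (mem_union_right _ (mem_singleton_self _))
    rcases mem_union.1 hy with h | h
    · exact yv_not_mem_lf hk _ h
    · have hmod := yv_mod hk (mem_singleton.1 h)
      have : j % k = j' % k := Nat.ModEq.add_left_cancel' _ hmod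
      rw [Nat.mod_eq_of_lt hj, Nat.mod_eq_of_lt hj'] at this
      exact hjj this
  · exact hSper hPQ A.1 A.2 B.1 B.2 hAB

lemma key (m k : ℕ) (hk : 0 < k) : k * SP m k ≤ SP (m + k) k := by
  have hbdd : ∀ n : ℕ, BddAbove {c | ∃ Sys : Finset (Finset (Finset (Fin n))),
      IsSpernerPartitionSystem Finset.univ k Sys ∧ Sys.card = c} := by
    intro n
    refine ⟨Fintype.card (Finset (Finset (Fin n))), ?_⟩
    rintro c ⟨Sys, -, rfl⟩
    exact card_le_univ _
  have hne0 : ({c | ∃ Sys : Finset (Finset (Finset (Fin m))),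
      IsSpernerPartitionSystem Finset.univ k Sys ∧ Sys.card = c} : Set ℕ).Nonempty := by
    refine ⟨0, ∅, ?_, rfl⟩
    constructor <;> simp
  have hmem := Nat.sSup_mem hne0 (hbdd m)
  obtain ⟨Sys, hSys, hcard⟩ := hmem
  set f : Finset (Finset (Fin m)) × ℕ → Finset (Finset (Fin (m + k))) :=
    fun pj => newPart hk pj.1 pj.2 with hf
  have hinj : Set.InjOn f ↑(Sys ×ˢ range k) := by
    rintro ⟨P, j⟩ hPj ⟨Q, j'⟩ hQj' heq
    simp only [coe_product, Set.mem_prod, mem_coe, coe_range, Set.mem_Iio] at hPj hQj'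
    by_contra hnepair
    have hne' : P ≠ Q ∨ j ≠ j' := by
      by_contra h
      push_neg at h
      exact hnepair (by rw [h.1, h.2])
    have hpart := newPart_isPartition hk (hSys.1 P hPj.1) j
    have hnonempty : (newPart hk P j).Nonempty := card_pos.1 (by rw [hpart.1]; exact hk)
    obtain ⟨C, hC⟩ := hnonempty
    have heq' : newPart hk P j = newPart hk Q j' := heq
    exact cross hk (hSys.1 P hPj.1)
      (fun h => hSys.2 P hPj.1 Q hQj'.1 h) hPj.2 hQj'.2 hne' C hC C (heq' ▸ hC) subset_rfl
  set Sys' := (Sys ×ˢ range k).image f with hSys'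
  have hcard' : Sys'.card = Sys.card * k := by
    rw [hSys', card_image_of_injOn hinj, card_product, card_range]
  have hSper' : IsSpernerPartitionSystem (univ : Finset (Fin (m + k))) k Sys' := by
    constructor
    · rintro P' hP'
      rw [hSys', mem_image] at hP'
      obtain ⟨⟨P, j⟩, hPj, rfl⟩ := hP'
      rw [mem_product] at hPj
      exact newPart_isPartition hk (hSys.1 P hPj.1) j
    · rintro P' hP' Q' hQ' hnePQ A hA B hB
      rw [hSys', mem_image] at hP' hQ'
      obtain ⟨⟨P, j⟩, hPj, rfl⟩ := hP'
      obtain ⟨⟨Q, j'⟩, hQj', rfl⟩ := hQ'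
      rw [mem_product, mem_range] at hPj hQj'
      have hne' : P ≠ Q ∨ j ≠ j' := by
        by_contra h
        push_neg at h
        exact hnePQ (by simp only [hf, h.1, h.2])
      exact cross hk (hSys.1 P hPj.1)
        (fun h => hSys.2 P hPj.1 Q hQj'.1 h) hPj.2 hQj'.2 hne' A hA B hB
  have hmem' : k * SP m k ∈ {c | ∃ Sys : Finset (Finset (Finset (Fin (m + k)))),
      IsSpernerPartitionSystem Finset.univ k Sys ∧ Sys.card = c} :=
    ⟨Sys', hSper', by rw [hcard', hcard, mul_comm]; rfl⟩
  exact le_csSup (hbdd (m + k)) hmem'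

end SPAux

theorem SP_ge_k_mul_SP_sub_k (n k : ℕ) (hk : 1 ≤ k) (hn : k ≤ n - k) :
    k * SP (n - k) k ≤ SP n k := by
  have hkn : k ≤ n := le_trans hn (Nat.sub_le n k)
  have h1 : n - k + k = n := Nat.sub_add_cancel hkn
  have := SPAux.key (n - k) k hk
  rwa [h1] at this
end

section
/- For all integers k ≥ 1 and ℓ ≥ 1, SP(ℓk, k) = C(ℓk - 1, ℓ - 1); moreover, a Sperner k-partition system on an (ℓk)-element set achieves this bound only if every class of every partition in the system has exactly ℓ elements. -/
open Finset

namespace SPAux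

/-- `fct n c = c! * (n-c)!` as an integer. -/
def fct (n c : ℕ) : ℤ := ((c.factorial * (n - c).factorial : ℕ) : ℤ)

lemma delta_lt (n c : ℕ) (h : c + 2 ≤ n) :
    fct n (c+1) - fct n c < fct n (c+2) - fct n (c+1) := by
  obtain ⟨t, ht⟩ : ∃ t, n = c + 2 + t := ⟨n - (c+2), by omega⟩
  subst ht
  have h1 : c + 2 + t - c = t + 2 := by omega
  have h2 : c + 2 + t - (c+1) = t + 1 := by omega
  have h3 : c + 2 + t - (c+2) = t := by omega
  simp only [fct, h1, h2, h3]
  have e1 : (t+2).factorial = (t+2) * ((t+1) * t.factorial) := by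
    rw [Nat.factorial_succ, Nat.factorial_succ]
  have e2 : (t+1).factorial = (t+1) * t.factorial := Nat.factorial_succ t
  have e3 : (c+2).factorial = (c+2) * ((c+1) * c.factorial) := by
    rw [Nat.factorial_succ, Nat.factorial_succ]
  have e4 : (c+1).factorial = (c+1) * c.factorial := Nat.factorial_succ c
  rw [e1, e2, e3, e4]
  push_cast
  have hc : (0:ℤ) < c.factorial := by exact_mod_cast c.factorial_pos
  have htp : (0:ℤ) < t.factorial := by exact_mod_cast t.factorial_pos
  nlinarith [mul_pos hc htp, sq_nonneg ((c:ℤ) - t), mul_nonneg (mul_nonneg hc.le htp.le) (sq_nonneg ((c:ℤ) - t))]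

lemma delta_le (n : ℕ) (a : ℕ) : ∀ b, a ≤ b → b + 2 ≤ n →
    fct n (a+1) - fct n a ≤ fct n (b+1) - fct n b := by
  intro b hab
  induction b, hab using Nat.le_induction with
  | base => intro _; exact le_rfl
  | succ b hb ih =>
    intro h
    exact le_trans (ih (by omega)) (le_of_lt (delta_lt n b (by omega)))

lemma up_gen (n b : ℕ) : ∀ c, b ≤ c → c + 1 ≤ n →
    fct n b + ((c:ℤ) - b) * (fct n (b+1) - fct n b) ≤ fct n c := by
  intro c hbc
  induction c, hbc using Nat.le_induction with
  | base => intro _; simp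
  | succ c hc ih =>
    intro h
    have h1 : fct n b + ((c:ℤ) - b) * (fct n (b+1) - fct n b) ≤ fct n c := ih (by omega)
    have h2 : fct n (b+1) - fct n b ≤ fct n (c+1) - fct n c := delta_le n b c hc (by omega)
    push_cast
    linarith

lemma down_gen (n b : ℕ) (hb : b + 2 ≤ n) : ∀ d, d ≤ b + 1 →
    fct n (b+1) ≤ fct n (b+1-d) + (d:ℤ) * (fct n (b+1) - fct n b) := by
  intro d
  induction d with
  | zero => intro _; simp
  | succ d ih =>
    intro hd
    have h1 := ih (by omega)
    have hc : b + 1 - d = (b + 1 - (d+1)) + 1 := by omega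
    have h2 : fct n (b+1-(d+1)+1) - fct n (b+1-(d+1)) ≤ fct n (b+1) - fct n b :=
      delta_le n (b+1-(d+1)) b (by omega) hb
    rw [hc] at h1
    have hbd : b + 1 - (d+1) = b - d := by omega
    rw [hbd] at h1 h2
    push_cast
    linarith

/-- Supporting line at `ℓ` with slope `s₀ = fct n (ℓ+1) - fct n ℓ`. -/
lemma line_le (n ℓ : ℕ) (hℓ : 1 ≤ ℓ) (hn : ℓ + 1 ≤ n) (c : ℕ) (hc1 : 1 ≤ c) (hcn : c + 1 ≤ n) :
    fct n ℓ + ((c:ℤ) - ℓ) * (fct n (ℓ+1) - fct n ℓ) ≤ fct n c ∧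
    (c ≠ ℓ → c ≠ ℓ + 1 → fct n ℓ + ((c:ℤ) - ℓ) * (fct n (ℓ+1) - fct n ℓ) < fct n c) := by
  set s₀ := fct n (ℓ+1) - fct n ℓ with hs₀
  rcases le_or_gt ℓ c with hlc | hcl
  · -- c ≥ ℓ
    refine ⟨up_gen n ℓ c hlc hcn, fun hne hne1 => ?_⟩
    have hc2 : ℓ + 2 ≤ c := by omega
    have h1 : fct n (ℓ+1) + ((c:ℤ) - (ℓ+1)) * (fct n (ℓ+2) - fct n (ℓ+1)) ≤ fct n c := by
      have := up_gen n (ℓ+1) c (by omega) hcn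
      push_cast at this ⊢
      convert this using 3 <;> push_cast <;> ring
    have h2 : s₀ < fct n (ℓ+2) - fct n (ℓ+1) := delta_lt n ℓ (by omega)
    have h3 : (1:ℤ) ≤ (c:ℤ) - (ℓ+1) := by push_cast; omega
    have h4 : ((c:ℤ) - (ℓ+1)) * s₀ < ((c:ℤ) - (ℓ+1)) * (fct n (ℓ+2) - fct n (ℓ+1)) :=
      mul_lt_mul_of_pos_left h2 (by linarith)
    have h5 : fct n (ℓ+1) = fct n ℓ + s₀ := by rw [hs₀]; ring
    nlinarith [h1, h4]
  · -- c < ℓ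
    have hℓn : ℓ - 1 + 2 ≤ n := by omega
    have hd := down_gen n (ℓ-1) hℓn (ℓ - c) (by omega)
    have hb1 : ℓ - 1 + 1 = ℓ := by omega
    rw [hb1] at hd
    rw [show ℓ - (ℓ - c) = c by omega] at hd
    have h2 : fct n ℓ - fct n (ℓ-1) < s₀ := by
      have := delta_lt n (ℓ-1) (by omega)
      rw [hb1] at this
      have : fct n (ℓ-1+2) = fct n (ℓ+1) := by rw [show ℓ-1+2 = ℓ+1 by omega]
      rw [hs₀]
      have h := delta_lt n (ℓ-1) (by omega)
      rw [hb1, show ℓ-1+2 = ℓ+1 by omega] at h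
      linarith
    have h3 : (1:ℤ) ≤ ((ℓ - c : ℕ) : ℤ) := by exact_mod_cast Nat.one_le_iff_ne_zero.mpr (by omega)
    have h4 : ((ℓ - c:ℕ):ℤ) * (fct n ℓ - fct n (ℓ-1)) < ((ℓ - c:ℕ):ℤ) * s₀ :=
      mul_lt_mul_of_pos_left h2 (by linarith)
    have hcast : ((ℓ - c:ℕ):ℤ) = (ℓ:ℤ) - c := by push_cast; omega
    have strict : fct n ℓ + ((c:ℤ) - ℓ) * s₀ < fct n c := by
      rw [hcast] at h3 h4 hd
      have hring : ((c:ℤ) - ℓ) * s₀ = -(((ℓ:ℤ) - c) * s₀) := by ring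
      linarith [hd, h4, hring]
    exact ⟨le_of_lt strict, fun _ _ => strict⟩

lemma convex_bound {β : Type*} [DecidableEq β] (s : Finset β) (w : β → ℕ) (k ℓ n : ℕ)
    (hk : 1 ≤ k) (hℓ : 1 ≤ ℓ) (hn : n = ℓ * k) (hcard : s.card = k)
    (hw1 : ∀ b ∈ s, 1 ≤ w b) (hsum : ∑ b ∈ s, w b = n) :
    k * (ℓ.factorial * (n - ℓ).factorial) ≤ ∑ b ∈ s, (w b).factorial * (n - w b).factorial ∧
    (∑ b ∈ s, (w b).factorial * (n - w b).factorial ≤ k * (ℓ.factorial * (n - ℓ).factorial) →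
      ∀ b ∈ s, w b = ℓ) := by
  rcases eq_or_lt_of_le hk with hk1 | hk2
  · -- k = 1
    obtain ⟨b₀, hb₀⟩ := Finset.card_eq_one.mp (by rw [hcard, ← hk1])
    subst hb₀
    simp only [Finset.sum_singleton, Finset.mem_singleton] at hsum ⊢
    rw [← hk1, mul_one] at hn
    have hw : w b₀ = ℓ := by omega
    rw [hw, ← hk1]
    exact ⟨by simp [hn, ← hk1], fun _ b hb => by rw [hb, hw]⟩
  · -- k ≥ 2
    have hℓn : ℓ + 1 ≤ n := by nlinarith
    have hwub : ∀ b ∈ s, w b + 1 ≤ n := by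
      intro b hb
      have h1 : (s.erase b).card • 1 ≤ ∑ b' ∈ s.erase b, w b' :=
        Finset.card_nsmul_le_sum _ _ _ (fun b' hb' => hw1 b' (Finset.mem_of_mem_erase hb'))
      have h2 : ∑ b' ∈ s.erase b, w b' + w b = n := by
        rw [Finset.sum_erase_add s w hb]; exact hsum
      have h3 : (s.erase b).card = k - 1 := by rw [Finset.card_erase_of_mem hb, hcard]
      simp only [smul_eq_mul, mul_one] at h1
      omega
    set s₀ := fct n (ℓ+1) - fct n ℓ with hs₀
    have hline : ∀ b ∈ s, fct n ℓ + ((w b:ℤ) - ℓ) * s₀ ≤ fct n (w b) :=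
      fun b hb => (line_le n ℓ hℓ hℓn (w b) (hw1 b hb) (hwub b hb)).1
    have hsumline : ∑ b ∈ s, (fct n ℓ + ((w b:ℤ) - ℓ) * s₀) = (k:ℤ) * fct n ℓ := by
      rw [Finset.sum_add_distrib, Finset.sum_const, ← Finset.sum_mul, hcard]
      have hz : ∑ b ∈ s, ((w b:ℤ) - ℓ) = 0 := by
        rw [Finset.sum_sub_distrib, Finset.sum_const, hcard]
        have hcast : ((∑ b ∈ s, w b : ℕ) : ℤ) = (n:ℤ) := by rw [hsum]
        push_cast at hcast
        rw [hcast, hn]; push_cast; ring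
      rw [hz, zero_mul, add_zero, nsmul_eq_mul]
    have hmain : (k:ℤ) * fct n ℓ ≤ ∑ b ∈ s, fct n (w b) := by
      rw [← hsumline]; exact Finset.sum_le_sum hline
    have hcastsum : (∑ b ∈ s, fct n (w b)) = ((∑ b ∈ s, (w b).factorial * (n - w b).factorial : ℕ) : ℤ) := by
      simp only [fct]; push_cast; ring
    have hcastl : (k:ℤ) * fct n ℓ = ((k * (ℓ.factorial * (n - ℓ).factorial) : ℕ) : ℤ) := by
      simp only [fct]; push_cast; ring
    constructor
    · have := hmain
      rw [hcastsum, hcastl] at this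
      exact_mod_cast this
    · intro hEq
      have hEq' : ∑ b ∈ s, fct n (w b) ≤ (k:ℤ) * fct n ℓ := by
        rw [hcastsum, hcastl]; exact_mod_cast hEq
      -- all weights are ℓ or ℓ+1
      have hmem : ∀ b ∈ s, w b = ℓ ∨ w b = ℓ + 1 := by
        by_contra hcon
        push_neg at hcon
        obtain ⟨b₀, hb₀, hb₀1, hb₀2⟩ := hcon
        have hstrict : fct n ℓ + ((w b₀:ℤ) - ℓ) * s₀ < fct n (w b₀) :=
          (line_le n ℓ hℓ hℓn (w b₀) (hw1 b₀ hb₀) (hwub b₀ hb₀)).2 hb₀1 hb₀2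
        have : ∑ b ∈ s, (fct n ℓ + ((w b:ℤ) - ℓ) * s₀) < ∑ b ∈ s, fct n (w b) :=
          Finset.sum_lt_sum hline ⟨b₀, hb₀, hstrict⟩
        rw [hsumline] at this
        linarith
      -- none can be ℓ+1
      intro b hb
      rcases hmem b hb with h | h
      · exact h
      · exfalso
        have hge : ∀ b' ∈ s, ℓ ≤ w b' := by
          intro b' hb'
          rcases hmem b' hb' with h' | h' <;> omega
        have : ∑ b' ∈ s, ℓ < ∑ b' ∈ s, w b' :=
          Finset.sum_lt_sum hge ⟨b, hb, by omega⟩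
        rw [Finset.sum_const, hcard, smul_eq_mul, mul_comm] at this
        omega

end SPAux



namespace SPAuxB

lemma lym_nat (n : ℕ) (𝒜 : Finset (Finset (Fin n)))
    (h𝒜 : IsAntichain (· ⊆ ·) (𝒜 : Set (Finset (Fin n)))) :
    ∑ A ∈ 𝒜, A.card.factorial * (n - A.card).factorial ≤ n.factorial := by
  classical
  have hLYM : ∑ r ∈ range (n + 1), ((𝒜 # r).card : ℚ) / (n.choose r) ≤ 1 := by
    have := Finset.sum_card_slice_div_choose_le_one (𝕜 := ℚ) h𝒜
    rwa [Fintype.card_fin] at this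
  have hmap : ∀ A ∈ 𝒜, A.card ∈ range (n + 1) := by
    intro A _
    simp only [mem_range]
    have := Finset.card_le_card (Finset.subset_univ A)
    rw [Finset.card_univ, Fintype.card_fin] at this
    omega
  have step1 : ∑ A ∈ 𝒜, ((A.card.factorial * (n - A.card).factorial : ℕ) : ℚ)
      = ∑ r ∈ range (n + 1), ∑ A ∈ 𝒜.filter (fun A => A.card = r),
          ((A.card.factorial * (n - A.card).factorial : ℕ) : ℚ) :=
    (Finset.sum_fiberwise_of_maps_to hmap _).symm
  have step2 : ∀ r, ∑ A ∈ 𝒜.filter (fun A => A.card = r),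
      ((A.card.factorial * (n - A.card).factorial : ℕ) : ℚ)
      = ((𝒜 # r).card : ℚ) * ((r.factorial * (n - r).factorial : ℕ) : ℚ) := by
    intro r
    rw [show (𝒜 # r) = 𝒜.filter (fun A => A.card = r) from rfl]
    rw [Finset.sum_congr rfl (fun A hA => by rw [(Finset.mem_filter.mp hA).2])]
    rw [Finset.sum_const, nsmul_eq_mul]
  have step3 : ∀ r ∈ range (n + 1), ((𝒜 # r).card : ℚ) * ((r.factorial * (n - r).factorial : ℕ) : ℚ)
      = (n.factorial : ℚ) * (((𝒜 # r).card : ℚ) / (n.choose r)) := by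
    intro r hr
    have hrn : r ≤ n := by simpa using Nat.lt_succ_iff.mp (mem_range.mp hr)
    have hcpos : 0 < n.choose r := Nat.choose_pos hrn
    have hc : (n.choose r : ℚ) ≠ 0 := by positivity
    have hNat : n.choose r * (r.factorial * (n - r).factorial) = n.factorial := by
      rw [← mul_assoc]; exact Nat.choose_mul_factorial_mul_factorial hrn
    have hfacQ : (n.choose r : ℚ) * ((r.factorial : ℚ) * ((n - r).factorial : ℚ)) = (n.factorial : ℚ) := by
      exact_mod_cast hNat
    push_cast
    field_simp
    linear_combination ((𝒜 # r).card : ℚ) * hfacQ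
  have chain : ((∑ A ∈ 𝒜, A.card.factorial * (n - A.card).factorial : ℕ) : ℚ) ≤ (n.factorial : ℚ) := by
    push_cast [Nat.cast_sum]
    calc ∑ A ∈ 𝒜, ((A.card.factorial : ℚ) * ((n - A.card).factorial : ℚ))
        = ∑ A ∈ 𝒜, ((A.card.factorial * (n - A.card).factorial : ℕ) : ℚ) := by push_cast; rfl
      _ = ∑ r ∈ range (n + 1), ∑ A ∈ 𝒜.filter (fun A => A.card = r),
            ((A.card.factorial * (n - A.card).factorial : ℕ) : ℚ) := step1
      _ = ∑ r ∈ range (n + 1), ((𝒜 # r).card : ℚ) * ((r.factorial * (n - r).factorial : ℕ) : ℚ) := by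
            exact Finset.sum_congr rfl fun r _ => step2 r
      _ = ∑ r ∈ range (n + 1), (n.factorial : ℚ) * (((𝒜 # r).card : ℚ) / (n.choose r)) :=
            Finset.sum_congr rfl step3
      _ = (n.factorial : ℚ) * ∑ r ∈ range (n + 1), ((𝒜 # r).card : ℚ) / (n.choose r) := by
            rw [Finset.mul_sum]
      _ ≤ (n.factorial : ℚ) * 1 := by
            have : (0:ℚ) ≤ (n.factorial : ℚ) := by positivity
            exact mul_le_mul_of_nonneg_left hLYM this
      _ = (n.factorial : ℚ) := mul_one _
  exact_mod_cast chain

lemma Nval (k ℓ : ℕ) (hk : 1 ≤ k) (hℓ : 1 ≤ ℓ) :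
    (ℓ * k - 1).choose (ℓ - 1) * (k * (ℓ.factorial * (ℓ * k - ℓ).factorial)) = (ℓ * k).factorial := by
  obtain ⟨a, rfl⟩ : ∃ a, ℓ = a + 1 := ⟨ℓ - 1, by omega⟩
  have hn1 : 1 ≤ (a + 1) * k := by nlinarith
  obtain ⟨m, hm⟩ : ∃ m, (a + 1) * k = m + 1 := ⟨(a + 1) * k - 1, by omega⟩
  have ham : a ≤ m := by nlinarith
  have h2 : m.choose a * a.factorial * (m - a).factorial = m.factorial :=
    Nat.choose_mul_factorial_mul_factorial ham
  rw [hm]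
  have h3 : m + 1 - 1 = m := by omega
  have h4 : a + 1 - 1 = a := by omega
  have h5 : m + 1 - (a + 1) = m - a := by omega
  rw [h3, h4, h5, Nat.factorial_succ (a), Nat.factorial_succ m]
  calc m.choose a * (k * ((a + 1) * a.factorial * (m - a).factorial))
      = (k * (a + 1)) * (m.choose a * a.factorial * (m - a).factorial) := by ring
    _ = (m + 1) * m.factorial := by rw [show k * (a+1) = m + 1 from by rw [mul_comm]; exact hm, h2]

lemma Nk (k ℓ : ℕ) (hk : 1 ≤ k) (hℓ : 1 ≤ ℓ) :
    k * ((ℓ * k - 1).choose (ℓ - 1)) = (ℓ * k).choose ℓ := by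
  obtain ⟨a, rfl⟩ : ∃ a, ℓ = a + 1 := ⟨ℓ - 1, by omega⟩
  have hn1 : 1 ≤ (a + 1) * k := by nlinarith
  obtain ⟨m, hm⟩ : ∃ m, (a + 1) * k = m + 1 := ⟨(a + 1) * k - 1, by omega⟩
  rw [hm, show m + 1 - 1 = m by omega, show a + 1 - 1 = a by omega]
  have h1 : m.succ * m.choose a = (m + 1).choose (a + 1) * (a + 1) := Nat.add_one_mul_choose_eq m a
  have key : (a + 1) * (k * m.choose a) = (a + 1) * ((m + 1).choose (a + 1)) := by
    calc (a + 1) * (k * m.choose a) = ((a+1) * k) * m.choose a := by ring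
      _ = (m + 1) * m.choose a := by rw [hm]
      _ = (m + 1).choose (a + 1) * (a + 1) := h1
      _ = (a + 1) * ((m + 1).choose (a + 1)) := by ring
  exact Nat.eq_of_mul_eq_mul_left (by omega) key

end SPAuxB




namespace SPAuxC

variable {n k ℓ : ℕ}

/-- Number of pairs `(i,j)` whose class equals `S`. -/
def cnt {N : ℕ} (F : Fin N → Fin k → Finset (Fin n)) (S : Finset (Fin n)) : ℕ :=
  (Finset.univ.filter (fun p : Fin N × Fin k => F p.1 p.2 = S)).card

/-- Invariant for Baranyai's induction. -/
structure Bar (n k ℓ : ℕ) (X : Finset (Fin n))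
    (F : Fin ((n - 1).choose (ℓ - 1)) → Fin k → Finset (Fin n)) : Prop where
  sub : ∀ i j, F i j ⊆ X
  uniq : ∀ i, ∀ x ∈ X, ∃! j, x ∈ F i j
  cle : ∀ i j, (F i j).card ≤ ℓ
  cnt_eq : ∀ S : Finset (Fin n), S ⊆ X → S.card ≤ ℓ →
    cnt F S = (n - X.card).choose (ℓ - S.card)

lemma bar_disj {X F} (hF : Bar n k ℓ X F) (i : Fin ((n-1).choose (ℓ-1))) :
    ∀ j j', j ≠ j' → Disjoint (F i j) (F i j') := by
  intro j j' hjj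
  rw [Finset.disjoint_left]
  intro x hxj hxj'
  obtain ⟨j₀, _, hj₀⟩ := hF.uniq i x (hF.sub i j hxj)
  exact hjj ((hj₀ j hxj).trans (hj₀ j' hxj').symm)

lemma bar_sum_card {X F} (hF : Bar n k ℓ X F) (i : Fin ((n-1).choose (ℓ-1))) :
    ∑ j : Fin k, (F i j).card = X.card := by
  have hbi : Finset.univ.biUnion (F i) = X := by
    ext x
    simp only [Finset.mem_biUnion, Finset.mem_univ, true_and]
    constructor
    · rintro ⟨j, hj⟩; exact hF.sub i j hj
    · intro hx; obtain ⟨j, hj, _⟩ := hF.uniq i x hx; exact ⟨j, hj⟩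
  rw [← hbi, Finset.card_biUnion (fun j _ j' _ h => bar_disj hF i j j' h)]

lemma bar_sum_def (hn : n = ℓ * k) {X F} (hF : Bar n k ℓ X F) (hXn : X.card ≤ n)
    (i : Fin ((n-1).choose (ℓ-1))) :
    ∑ j : Fin k, (ℓ - (F i j).card) = n - X.card := by
  have h1 : ∑ j : Fin k, ((ℓ - (F i j).card) + (F i j).card) = ∑ _j : Fin k, ℓ :=
    Finset.sum_congr rfl (fun j _ => Nat.sub_add_cancel (hF.cle i j))
  rw [Finset.sum_add_distrib, bar_sum_card hF i, Finset.sum_const, Finset.card_univ,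
    Fintype.card_fin, smul_eq_mul] at h1
  have : k * ℓ = n := by rw [hn, mul_comm]
  omega

lemma bar_step (hk : 1 ≤ k) (hℓ : 1 ≤ ℓ) (hn : n = ℓ * k)
    {X : Finset (Fin n)} {F} (hF : Bar n k ℓ X F) {a : Fin n} (ha : a ∉ X) :
    ∃ F', Bar n k ℓ (insert a X) F' := by
  classical
  -- basic cardinalities
  have hXn : X.card + 1 ≤ n := by
    have h := Finset.card_le_univ (insert a X)
    rwa [Finset.card_insert_of_notMem ha, Fintype.card_fin] at h
  set r := n - X.card with hr
  have hr1 : 1 ≤ r := by omega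
  -- demand function
  set d : Finset (Fin n) → ℕ :=
    fun S => if S.card < ℓ then (r - 1).choose (ℓ - S.card - 1) else 0 with hd
  set T : Finset (Finset (Fin n)) := X.powerset.filter (fun S => S.card ≤ ℓ) with hT
  set g : Finset (Fin n) → Finset (Finset (Fin n) × ℕ) :=
    fun S => (Finset.range (d S)).image (fun c => (S, c)) with hg
  set t : Fin ((n - 1).choose (ℓ - 1)) → Finset (Finset (Fin n) × ℕ) :=
    fun i => (Finset.univ.image (F i)).biUnion g with ht
  have hgcard : ∀ S, (g S).card = d S := by
    intro S
    simp only [hg]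
    rw [Finset.card_image_of_injective _ (fun c c' h => (Prod.mk.injEq _ _ _ _).mp h |>.2),
      Finset.card_range]
  have hgfst : ∀ S p, p ∈ g S → p.1 = S := by
    intro S p hp
    simp only [hg, Finset.mem_image, Finset.mem_range] at hp
    obtain ⟨c, _, rfl⟩ := hp
    rfl
  have hgsnd : ∀ S p, p ∈ g S → p.2 < d S := by
    intro S p hp
    simp only [hg, Finset.mem_image, Finset.mem_range] at hp
    obtain ⟨c, hc, rfl⟩ := hp
    exact hc
  have hgmem : ∀ S c, c < d S → (S, c) ∈ g S := by
    intro S c hc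
    simp only [hg, Finset.mem_image, Finset.mem_range]
    exact ⟨c, hc, rfl⟩
  have hgdisj : ∀ S S', S ≠ S' → Disjoint (g S) (g S') := by
    intro S S' hne
    rw [Finset.disjoint_left]
    intro p h1 h2
    exact hne ((hgfst S p h1).symm.trans (hgfst S' p h2))
  have himgT : ∀ i, Finset.univ.image (F i) ⊆ T := by
    intro i S hS
    obtain ⟨j, _, rfl⟩ := Finset.mem_image.mp hS
    simp only [hT, Finset.mem_filter, Finset.mem_powerset]
    exact ⟨hF.sub i j, hF.cle i j⟩
  -- the key identity  cnt F S * (ℓ - S.card) = r * d S  for S ∈ T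
  have hkey : ∀ S ∈ T, cnt F S * (ℓ - S.card) = r * d S := by
    intro S hS
    simp only [hT, Finset.mem_filter, Finset.mem_powerset] at hS
    rw [hF.cnt_eq S hS.1 hS.2, ← hr]
    rcases lt_or_eq_of_le hS.2 with hlt | heq
    · have hdS : d S = (r - 1).choose (ℓ - S.card - 1) := by simp only [hd]; rw [if_pos hlt]
      rw [hdS]
      have h1 : (r - 1) + 1 = r := by omega
      have h2 : (ℓ - S.card - 1) + 1 = ℓ - S.card := by omega
      have h3 := Nat.add_one_mul_choose_eq (r - 1) (ℓ - S.card - 1)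
      rw [h1, h2] at h3
      exact h3.symm
    · have hdS : d S = 0 := by simp only [hd]; rw [if_neg (by omega)]
      rw [hdS, ← heq, Nat.sub_self, mul_zero, mul_zero]
  -- grouping sums of slack by class value
  have hgroup : ∀ (I : Finset (Fin ((n - 1).choose (ℓ - 1)))) (W : Finset (Finset (Fin n))),
      (∀ p : Fin ((n - 1).choose (ℓ - 1)) × Fin k, p.1 ∈ I → F p.1 p.2 ∈ W) →
      ∑ p ∈ I ×ˢ (Finset.univ : Finset (Fin k)), (ℓ - (F p.1 p.2).card)
        = ∑ S ∈ W, ((I ×ˢ (Finset.univ : Finset (Fin k))).filter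
            (fun p => F p.1 p.2 = S)).card * (ℓ - S.card) := by
    intro I W hmap
    rw [← Finset.sum_fiberwise_of_maps_to (g := fun p => F p.1 p.2)
      (fun p hp => hmap p (Finset.mem_product.mp hp).1)]
    refine Finset.sum_congr rfl fun S _ => ?_
    rw [Finset.sum_congr rfl (fun p hp => by rw [(Finset.mem_filter.mp hp).2]),
      Finset.sum_const, smul_eq_mul]
  have hslack : ∀ (I : Finset (Fin ((n - 1).choose (ℓ - 1)))),
      ∑ p ∈ I ×ˢ (Finset.univ : Finset (Fin k)), (ℓ - (F p.1 p.2).card) = I.card * r := by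
    intro I
    rw [Finset.sum_product]
    rw [Finset.sum_congr rfl (fun i _ => bar_sum_def hn hF (by omega) i)]
    rw [Finset.sum_const, smul_eq_mul, hr]
  -- Hall's condition
  have hHall : ∀ I : Finset (Fin ((n - 1).choose (ℓ - 1))), I.card ≤ (I.biUnion t).card := by
    intro I
    have hBU : I.biUnion t = (I.biUnion (fun i => Finset.univ.image (F i))).biUnion g := by
      simp only [ht]
      rw [Finset.biUnion_biUnion]
    set W := I.biUnion (fun i => Finset.univ.image (F i)) with hW
    have hWT : W ⊆ T := Finset.biUnion_subset.mpr (fun i _ => himgT i)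
    have hcardBU : (I.biUnion t).card = ∑ S ∈ W, d S := by
      rw [hBU, Finset.card_biUnion (fun S _ S' _ h => hgdisj S S' h)]
      exact Finset.sum_congr rfl fun S _ => hgcard S
    have hmono : ∀ S ∈ W, ((I ×ˢ (Finset.univ : Finset (Fin k))).filter
        (fun p => F p.1 p.2 = S)).card * (ℓ - S.card) ≤ cnt F S * (ℓ - S.card) := by
      intro S _
      exact Nat.mul_le_mul_right _ (Finset.card_le_card (by
        refine Finset.filter_subset_filter _ (fun p _ => Finset.mem_univ p)))
    have hchain : I.card * r ≤ ∑ S ∈ W, r * d S := by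
      rw [← hslack I, hgroup I W (fun p hp => Finset.mem_biUnion.mpr
        ⟨p.1, hp, Finset.mem_image_of_mem _ (Finset.mem_univ p.2)⟩)]
      calc ∑ S ∈ W, ((I ×ˢ (Finset.univ : Finset (Fin k))).filter
            (fun p => F p.1 p.2 = S)).card * (ℓ - S.card)
          ≤ ∑ S ∈ W, cnt F S * (ℓ - S.card) := Finset.sum_le_sum hmono
        _ = ∑ S ∈ W, r * d S := Finset.sum_congr rfl fun S hS => hkey S (hWT hS)
    rw [← Finset.mul_sum] at hchain
    rw [hcardBU]
    have := Nat.mul_le_mul_left 1 hchain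
    calc I.card = I.card * r / r := by rw [Nat.mul_div_cancel _ (by omega)]
      _ ≤ r * (∑ S ∈ W, d S) / r := Nat.div_le_div_right (by omega)
      _ = ∑ S ∈ W, d S := by rw [Nat.mul_div_cancel_left _ (by omega)]
  -- total demand equals number of partitions
  have htotal : ∑ S ∈ T, d S = (n - 1).choose (ℓ - 1) := by
    have h1 := hgroup Finset.univ T
      (fun p _ => himgT p.1 (Finset.mem_image_of_mem _ (Finset.mem_univ p.2)))
    rw [hslack Finset.univ, Finset.card_univ, Fintype.card_fin] at h1
    simp only [Finset.univ_product_univ] at h1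
    have h2 : ∑ S ∈ T, (Finset.univ.filter
        (fun p : Fin ((n - 1).choose (ℓ - 1)) × Fin k => F p.1 p.2 = S)).card * (ℓ - S.card)
        = r * ∑ S ∈ T, d S := by
      rw [Finset.mul_sum]
      exact Finset.sum_congr rfl fun S hS => hkey S hS
    rw [h2] at h1
    have : (n - 1).choose (ℓ - 1) * r = (∑ S ∈ T, d S) * r := by
      rw [h1]; ring
    exact (Nat.eq_of_mul_eq_mul_right (by omega) this).symm
  -- apply Hall's theorem
  obtain ⟨f, hfinj, hft⟩ := (Finset.all_card_le_biUnion_card_iff_exists_injective t).mp hHall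
  -- the image of f is the full demand set R
  set R : Finset (Finset (Fin n) × ℕ) := T.biUnion g with hR
  have htR : ∀ i, t i ⊆ R := by
    intro i
    simp only [ht, hR]
    exact Finset.biUnion_subset_biUnion_of_subset_left _ (himgT i)
  have hRcard : R.card = (n - 1).choose (ℓ - 1) := by
    rw [hR, Finset.card_biUnion (fun S _ S' _ h => hgdisj S S' h)]
    rw [Finset.sum_congr rfl (fun S _ => hgcard S)]
    exact htotal
  have himgR : Finset.univ.image f = R := by
    apply Finset.eq_of_subset_of_card_le
    · intro p hp
      obtain ⟨i, _, rfl⟩ := Finset.mem_image.mp hp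
      exact htR i (hft i)
    · rw [Finset.card_image_of_injective _ hfinj, Finset.card_univ, Fintype.card_fin, hRcard]
  -- fiber counts
  have hfiber : ∀ S₀ ∈ T, (Finset.univ.filter (fun i => (f i).1 = S₀)).card = d S₀ := by
    intro S₀ hS₀
    have h2 : (Finset.univ.filter (fun i => (f i).1 = S₀)).image f
        = R.filter (fun p => p.1 = S₀) := by
      rw [← himgR, Finset.filter_image]
    have h3 : R.filter (fun p => p.1 = S₀) = g S₀ := by
      ext p
      simp only [Finset.mem_filter, hR, Finset.mem_biUnion]
      constructor
      · rintro ⟨⟨S, hST, hpg⟩, hfst⟩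
        have hSS : S = S₀ := by rw [← hgfst S p hpg, hfst]
        rwa [hSS] at hpg
      · intro hp
        exact ⟨⟨S₀, hS₀, hp⟩, hgfst S₀ p hp⟩
    calc (Finset.univ.filter (fun i => (f i).1 = S₀)).card
        = ((Finset.univ.filter (fun i => (f i).1 = S₀)).image f).card :=
          (Finset.card_image_of_injective _ hfinj).symm
      _ = (g S₀).card := by rw [h2, h3]
      _ = d S₀ := hgcard S₀
  -- choose the slot to extend for each i
  have hslot : ∀ i, ∃ j, F i j = (f i).1 := by
    intro i
    have := hft i
    simp only [ht, Finset.mem_biUnion] at this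
    obtain ⟨S, hSmem, hpg⟩ := this
    obtain ⟨j, _, rfl⟩ := Finset.mem_image.mp hSmem
    exact ⟨j, (hgfst _ _ hpg).symm⟩
  have hflt : ∀ i, (f i).2 < d ((f i).1) := by
    intro i
    have := hft i
    simp only [ht, Finset.mem_biUnion] at this
    obtain ⟨S, hSmem, hpg⟩ := this
    have h1 := hgfst _ _ hpg
    have h2 := hgsnd _ _ hpg
    rwa [h1]
  choose gi hgi using hslot
  have hdpos : ∀ i, 0 < d ((f i).1) := fun i => Nat.pos_of_ne_zero (by
    intro h0; have := hflt i; omega)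
  have hszlt : ∀ i, (F i (gi i)).card < ℓ := by
    intro i
    have h := hdpos i
    by_contra hcon
    rw [← hgi i] at h
    simp only [hd] at h
    rw [if_neg hcon] at h
    omega
  have hanotin : ∀ i j, a ∉ F i j := fun i j h => ha (hF.sub i j h)
  -- the new family
  refine ⟨fun i j => if j = gi i then insert a (F i j) else F i j, ?_, ?_, ?_, ?_⟩
  · -- sub
    intro i j
    show (if j = gi i then insert a (F i j) else F i j) ⊆ insert a X
    by_cases h : j = gi i
    · rw [if_pos h]; exact Finset.insert_subset_insert _ (hF.sub i j)
    · rw [if_neg h]; exact (hF.sub i j).trans (Finset.subset_insert _ _)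
  · -- uniq
    intro i x hx
    rcases Finset.mem_insert.mp hx with rfl | hxX
    · refine ⟨gi i, ?_, ?_⟩
      · show x ∈ if gi i = gi i then insert x (F i (gi i)) else F i (gi i)
        rw [if_pos rfl]; exact Finset.mem_insert_self _ _
      · intro j hj
        by_contra hne
        have hj' : x ∈ if j = gi i then insert x (F i j) else F i j := hj
        rw [if_neg hne] at hj'
        exact hanotin i j hj'
    · have hxa : x ≠ a := fun h => ha (h ▸ hxX)
      obtain ⟨j₀, hj₀, huq⟩ := hF.uniq i x hxX
      refine ⟨j₀, ?_, ?_⟩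
      · show x ∈ if j₀ = gi i then insert a (F i j₀) else F i j₀
        by_cases h : j₀ = gi i
        · rw [if_pos h]; exact Finset.mem_insert_of_mem hj₀
        · rw [if_neg h]; exact hj₀
      · intro j hj
        have hj' : x ∈ if j = gi i then insert a (F i j) else F i j := hj
        apply huq
        by_cases h : j = gi i
        · rw [if_pos h] at hj'
          rcases Finset.mem_insert.mp hj' with h' | h'
          · exact absurd h' hxa
          · exact h'
        · rwa [if_neg h] at hj'
  · -- cle
    intro i j
    show (if j = gi i then insert a (F i j) else F i j).card ≤ ℓ
    by_cases h : j = gi i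
    · rw [if_pos h]
      rw [Finset.card_insert_of_notMem (hanotin i j)]
      have := hszlt i
      rw [← h] at this
      omega
    · rw [if_neg h]; exact hF.cle i j
  · -- cnt_eq
    intro S hsub hsℓ
    have hXcard : (insert a X).card = X.card + 1 := Finset.card_insert_of_notMem ha
    rw [hXcard]
    have hnr : n - (X.card + 1) = r - 1 := by omega
    rw [hnr]
    by_cases haS : a ∈ S
    · -- new sets containing a
      have hS0sub : S.erase a ⊆ X := by
        intro x hx
        have hxS := Finset.mem_of_mem_erase hx
        have hxa := Finset.ne_of_mem_erase hx
        rcases Finset.mem_insert.mp (hsub hxS) with h | h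
        · exact absurd h hxa
        · exact h
      have hS0c : (S.erase a).card = S.card - 1 := Finset.card_erase_of_mem haS
      have hScard1 : 1 ≤ S.card := Finset.card_pos.mpr ⟨a, haS⟩
      have hS0T : S.erase a ∈ T := by
        simp only [hT, Finset.mem_filter, Finset.mem_powerset]
        exact ⟨hS0sub, by omega⟩
      have hset : Finset.univ.filter (fun p : Fin ((n - 1).choose (ℓ - 1)) × Fin k =>
          (if p.2 = gi p.1 then insert a (F p.1 p.2) else F p.1 p.2) = S)
          = (Finset.univ.filter (fun i => (f i).1 = S.erase a)).image (fun i => (i, gi i)) := by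
        ext p
        simp only [Finset.mem_filter, Finset.mem_univ, true_and, Finset.mem_image]
        constructor
        · intro hp
          by_cases h : p.2 = gi p.1
          · rw [if_pos h] at hp
            refine ⟨p.1, ?_, ?_⟩
            · rw [← hgi p.1, ← h]
              rw [← hp, Finset.erase_insert (hanotin p.1 p.2)]
            · rw [← h]
          · rw [if_neg h] at hp
            exact absurd (hp ▸ haS) (hanotin p.1 p.2)
        · rintro ⟨i, hi, rfl⟩
          show (if gi i = gi i then insert a (F i (gi i)) else F i (gi i)) = S
          rw [if_pos rfl, hgi i, hi, Finset.insert_erase haS]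
      have hcntdef : cnt (fun i j => if j = gi i then insert a (F i j) else F i j) S
          = (Finset.univ.filter (fun p : Fin ((n - 1).choose (ℓ - 1)) × Fin k =>
            (if p.2 = gi p.1 then insert a (F p.1 p.2) else F p.1 p.2) = S)).card := rfl
      rw [hcntdef, hset,
        Finset.card_image_of_injective _ (fun i i' h => (Prod.mk.injEq _ _ _ _).mp h |>.1),
        hfiber _ hS0T]
      simp only [hd]
      rw [if_pos (by omega), hS0c]
      congr 1
      omega
    · -- old sets
      have hSX : S ⊆ X := by
        intro x hx
        rcases Finset.mem_insert.mp (hsub hx) with h | h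
        · exact absurd (h ▸ hx) haS
        · exact h
      have hST : S ∈ T := by
        simp only [hT, Finset.mem_filter, Finset.mem_powerset]
        exact ⟨hSX, hsℓ⟩
      have hsplit := Finset.card_filter_add_card_filter_not
        (s := Finset.univ.filter (fun p : Fin ((n - 1).choose (ℓ - 1)) × Fin k => F p.1 p.2 = S))
        (p := fun p => p.2 = gi p.1)
      rw [Finset.filter_filter, Finset.filter_filter] at hsplit
      have hA : Finset.univ.filter (fun p : Fin ((n - 1).choose (ℓ - 1)) × Fin k =>
          (if p.2 = gi p.1 then insert a (F p.1 p.2) else F p.1 p.2) = S)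
          = Finset.univ.filter (fun p : Fin ((n - 1).choose (ℓ - 1)) × Fin k =>
            F p.1 p.2 = S ∧ ¬ p.2 = gi p.1) := by
        ext p
        simp only [Finset.mem_filter, Finset.mem_univ, true_and]
        constructor
        · intro hp
          by_cases h : p.2 = gi p.1
          · rw [if_pos h] at hp
            exact absurd (hp ▸ Finset.mem_insert_self a _) haS
          · rw [if_neg h] at hp
            exact ⟨hp, h⟩
        · intro ⟨h1, h2⟩
          rw [if_neg h2]
          exact h1
      have hB : (Finset.univ.filter (fun p : Fin ((n - 1).choose (ℓ - 1)) × Fin k =>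
          F p.1 p.2 = S ∧ p.2 = gi p.1)).card = d S := by
        have hset2 : Finset.univ.filter (fun p : Fin ((n - 1).choose (ℓ - 1)) × Fin k =>
            F p.1 p.2 = S ∧ p.2 = gi p.1)
            = (Finset.univ.filter (fun i => (f i).1 = S)).image (fun i => (i, gi i)) := by
          ext p
          simp only [Finset.mem_filter, Finset.mem_univ, true_and, Finset.mem_image]
          constructor
          · rintro ⟨h1, h2⟩
            exact ⟨p.1, by rw [← hgi p.1, ← h2, h1], by rw [← h2]⟩
          · rintro ⟨i, hi, rfl⟩
            exact ⟨by rw [hgi i, hi], rfl⟩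
        rw [hset2, Finset.card_image_of_injective _
          (fun i i' h => (Prod.mk.injEq _ _ _ _).mp h |>.1), hfiber _ hST]
      have hcnt : cnt F S = r.choose (ℓ - S.card) := by
        rw [hF.cnt_eq S hSX hsℓ, hr]
      have hcntdef : cnt (fun i j => if j = gi i then insert a (F i j) else F i j) S
          = (Finset.univ.filter (fun p : Fin ((n - 1).choose (ℓ - 1)) × Fin k =>
            (if p.2 = gi p.1 then insert a (F p.1 p.2) else F p.1 p.2) = S)).card := rfl
      rw [hcntdef, hA]
      have hcnt' : (Finset.univ.filter (fun p : Fin ((n - 1).choose (ℓ - 1)) × Fin k =>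
          F p.1 p.2 = S ∧ ¬ p.2 = gi p.1)).card + d S = r.choose (ℓ - S.card) := by
        rw [← hcnt]
        unfold cnt
        omega
      rcases lt_or_eq_of_le hsℓ with hlt | heq
      · have hdS : d S = (r - 1).choose (ℓ - S.card - 1) := by
          simp only [hd]; rw [if_pos hlt]
        have hpascal : r.choose (ℓ - S.card)
            = (r - 1).choose (ℓ - S.card - 1) + (r - 1).choose (ℓ - S.card) := by
          have h1 : r = (r - 1) + 1 := by omega
          have h2 : ℓ - S.card = (ℓ - S.card - 1) + 1 := by omega
          rw [h1, h2, Nat.choose_succ_succ]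
          simp [Nat.succ_eq_add_one]
        omega
      · have hdS : d S = 0 := by simp only [hd]; rw [if_neg (by omega)]
        have h0 : ℓ - S.card = 0 := by omega
        rw [h0, Nat.choose_zero_right] at hcnt' ⊢
        omega

lemma bar_empty (hk : 1 ≤ k) (hℓ : 1 ≤ ℓ) (hn : n = ℓ * k) :
    Bar n k ℓ (∅ : Finset (Fin n)) (fun _ _ => ∅) := by
  constructor
  · intro i j; exact Finset.Subset.refl _
  · intro i x hx; exact absurd hx (Finset.notMem_empty x)
  · intro i j; simp
  · intro S hsub hsℓ
    have hS : S = ∅ := Finset.subset_empty.mp hsub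
    subst hS
    have h1 : cnt (n := n) (k := k) (fun (_ : Fin ((n-1).choose (ℓ-1))) (_ : Fin k) => (∅ : Finset (Fin n))) ∅
        = (n - 1).choose (ℓ - 1) * k := by
      unfold cnt
      rw [Finset.filter_true_of_mem (fun _ _ => rfl), Finset.card_univ, Fintype.card_prod,
        Fintype.card_fin, Fintype.card_fin]
    rw [h1]
    simp only [Finset.card_empty, Nat.sub_zero]
    rw [mul_comm]
    subst hn
    exact SPAuxB.Nk k ℓ hk hℓ

lemma bar_univ (hk : 1 ≤ k) (hℓ : 1 ≤ ℓ) (hn : n = ℓ * k) :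
    ∃ F, Bar n k ℓ (Finset.univ : Finset (Fin n)) F := by
  suffices h : ∀ X : Finset (Fin n), ∃ F, Bar n k ℓ X F from h Finset.univ
  intro X
  induction X using Finset.induction_on with
  | empty => exact ⟨_, bar_empty hk hℓ hn⟩
  | @insert a X ha ih =>
    obtain ⟨F, hF⟩ := ih
    exact bar_step hk hℓ hn hF ha

lemma exists_good_system (k ℓ : ℕ) (hk : 1 ≤ k) (hℓ : 1 ≤ ℓ) :
    ∃ Sys : Finset (Finset (Finset (Fin (ℓ * k)))),
      IsSpernerPartitionSystem Finset.univ k Sys ∧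
      Sys.card = (ℓ * k - 1).choose (ℓ - 1) ∧
      ∀ P ∈ Sys, ∀ A ∈ P, A.card = ℓ := by
  classical
  set n := ℓ * k with hn
  obtain ⟨F, hF⟩ := bar_univ (n := n) hk hℓ rfl
  have huc : (Finset.univ : Finset (Fin n)).card = n := by
    rw [Finset.card_univ, Fintype.card_fin]
  have hr0 : n - (Finset.univ : Finset (Fin n)).card = 0 := by omega
  -- every class has size exactly ℓ
  have hsize : ∀ i j, (F i j).card = ℓ := by
    intro i j
    rcases lt_or_eq_of_le (hF.cle i j) with hlt | heq
    · exfalso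
      have h1 : cnt F (F i j) = Nat.choose 0 (ℓ - (F i j).card) := by
        rw [hF.cnt_eq (F i j) (Finset.subset_univ _) (hF.cle i j), hr0]
      have h2 : Nat.choose 0 (ℓ - (F i j).card) = 0 :=
        Nat.choose_eq_zero_of_lt (by omega)
      have h3 : (i, j) ∈ Finset.univ.filter
          (fun p : Fin ((n-1).choose (ℓ-1)) × Fin k => F p.1 p.2 = F i j) :=
        Finset.mem_filter.mpr ⟨Finset.mem_univ _, rfl⟩
      have h4 : 0 < cnt F (F i j) := Finset.card_pos.mpr ⟨(i, j), h3⟩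
      omega
    · exact heq
  have honce : ∀ S : Finset (Fin n), S.card = ℓ → cnt F S = 1 := by
    intro S hS
    rw [hF.cnt_eq S (Finset.subset_univ _) (le_of_eq hS), hr0, hS, Nat.sub_self,
      Nat.choose_zero_right]
  have hpair : ∀ (i i' : Fin ((n-1).choose (ℓ-1))) (j j' : Fin k),
      F i j = F i' j' → i = i' ∧ j = j' := by
    intro i i' j j' hEq
    have h1 := honce (F i j) (hsize i j)
    have h3 : (i, j) ∈ Finset.univ.filter
        (fun p : Fin ((n-1).choose (ℓ-1)) × Fin k => F p.1 p.2 = F i j) :=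
      Finset.mem_filter.mpr ⟨Finset.mem_univ _, rfl⟩
    have h4 : (i', j') ∈ Finset.univ.filter
        (fun p : Fin ((n-1).choose (ℓ-1)) × Fin k => F p.1 p.2 = F i j) :=
      Finset.mem_filter.mpr ⟨Finset.mem_univ _, hEq.symm⟩
    have h5 := Finset.card_le_one.mp (le_of_eq h1) _ h3 _ h4
    exact ⟨congrArg Prod.fst h5, congrArg Prod.snd h5⟩
  set Pi : Fin ((n-1).choose (ℓ-1)) → Finset (Finset (Fin n)) :=
    fun i => Finset.univ.image (F i) with hPi
  have hPipart : ∀ i, IsPartitionInto (Finset.univ : Finset (Fin n)) k (Pi i) := by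
    intro i
    refine ⟨?_, ?_, ?_, ?_⟩
    · rw [hPi]
      rw [Finset.card_image_of_injective _ (fun j j' h => (hpair i i j j' h).2),
        Finset.card_univ, Fintype.card_fin]
    · intro A hA
      obtain ⟨j, _, rfl⟩ := Finset.mem_image.mp hA
      exact Finset.card_pos.mp (by rw [hsize i j]; omega)
    · intro A _; exact Finset.subset_univ A
    · intro x _
      obtain ⟨j, hj, huq⟩ := hF.uniq i x (Finset.mem_univ x)
      refine ⟨F i j, ⟨Finset.mem_image_of_mem _ (Finset.mem_univ j), hj⟩, ?_⟩
      rintro B ⟨hB, hxB⟩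
      obtain ⟨j', _, rfl⟩ := Finset.mem_image.mp hB
      rw [huq j' hxB]
  have hPinj : Function.Injective Pi := by
    intro i i' hEq
    have hk0 : 0 < k := hk
    have hmem : F i ⟨0, hk0⟩ ∈ Pi i' := by
      rw [← hEq, hPi]; exact Finset.mem_image_of_mem _ (Finset.mem_univ _)
    obtain ⟨j', _, hj'⟩ := Finset.mem_image.mp hmem
    exact (hpair i' i j' ⟨0, hk0⟩ hj').1.symm
  refine ⟨Finset.univ.image Pi, ⟨?_, ?_⟩, ?_, ?_⟩
  · intro P hP
    obtain ⟨i, _, rfl⟩ := Finset.mem_image.mp hP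
    exact hPipart i
  · intro P hP Q hQ hPQ A hA B hB hAB
    obtain ⟨i, _, rfl⟩ := Finset.mem_image.mp hP
    obtain ⟨i', _, rfl⟩ := Finset.mem_image.mp hQ
    obtain ⟨j, _, rfl⟩ := Finset.mem_image.mp hA
    obtain ⟨j', _, rfl⟩ := Finset.mem_image.mp hB
    have hEq : F i j = F i' j' := Finset.eq_of_subset_of_card_le hAB
      (by rw [hsize i j, hsize i' j'])
    exact hPQ (congrArg Pi (hpair i i' j j' hEq).1)
  · rw [Finset.card_image_of_injective _ hPinj, Finset.card_univ, Fintype.card_fin]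
  · intro P hP A hA
    obtain ⟨i, _, rfl⟩ := Finset.mem_image.mp hP
    obtain ⟨j, _, rfl⟩ := Finset.mem_image.mp hA
    exact hsize i j

end SPAuxC

namespace SPAuxD
open Finset

lemma partition_disjoint {n k : ℕ} {P : Finset (Finset (Fin n))}
    (hP : IsPartitionInto (Finset.univ : Finset (Fin n)) k P) :
    ∀ A ∈ P, ∀ B ∈ P, A ≠ B → Disjoint A B := by
  intro A hA B hB hAB
  rw [Finset.disjoint_left]
  intro x hxA hxB
  obtain ⟨C, _, hC⟩ := hP.2.2.2 x (Finset.mem_univ x)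
  exact hAB ((hC A ⟨hA, hxA⟩).trans (hC B ⟨hB, hxB⟩).symm)

lemma partition_sum_card {n k : ℕ} {P : Finset (Finset (Fin n))}
    (hP : IsPartitionInto (Finset.univ : Finset (Fin n)) k P) :
    ∑ A ∈ P, A.card = n := by
  have hbi : P.biUnion id = (Finset.univ : Finset (Fin n)) := by
    ext x
    simp only [Finset.mem_biUnion, id, Finset.mem_univ, iff_true]
    obtain ⟨A, hA, hxA⟩ := (hP.2.2.2 x (Finset.mem_univ x)).exists
    exact ⟨A, hA, hxA⟩
  have := Finset.card_biUnion (t := id) (s := P) (partition_disjoint hP)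
  rw [hbi, Finset.card_univ, Fintype.card_fin] at this
  exact this.symm

lemma upper_core (k ℓ : ℕ) (hk : 1 ≤ k) (hℓ : 1 ≤ ℓ)
    (Sys : Finset (Finset (Finset (Fin (ℓ * k)))))
    (hS : IsSpernerPartitionSystem Finset.univ k Sys) :
    Sys.card ≤ (ℓ * k - 1).choose (ℓ - 1) ∧
    (Sys.card = (ℓ * k - 1).choose (ℓ - 1) → ∀ P ∈ Sys, ∀ A ∈ P, A.card = ℓ) := by
  classical
  obtain ⟨hpart, hsper⟩ := hS
  set fℓ := k * (ℓ.factorial * ((ℓ * k) - ℓ).factorial) with hfℓ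
  -- the union of all classes is an antichain
  have hdisjSys : (↑Sys : Set (Finset (Finset (Fin (ℓ * k))))).PairwiseDisjoint id := by
    intro P hP Q hQ hne
    simp only [Function.onFun, id]
    rw [Finset.disjoint_left]
    intro A hAP hAQ
    exact hsper P hP Q hQ hne A hAP A hAQ (Finset.Subset.refl A)
  have hanti : IsAntichain (· ⊆ ·) (↑(Sys.biUnion id) : Set (Finset (Fin (ℓ * k)))) := by
    intro A hA B hB hne hsub
    rw [Finset.mem_coe, Finset.mem_biUnion] at hA hB
    obtain ⟨P, hP, hAP⟩ := hA
    obtain ⟨Q, hQ, hBQ⟩ := hB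
    by_cases hPQ : P = Q
    · subst hPQ
      obtain ⟨x, hx⟩ := (hpart P hP).2.1 A hAP
      obtain ⟨C, _, hC⟩ := (hpart P hP).2.2.2 x (Finset.mem_univ x)
      exact hne ((hC A ⟨hAP, hx⟩).trans (hC B ⟨hBQ, hsub hx⟩).symm)
    · exact hsper P hP Q hQ hPQ A hAP B hBQ hsub
  have hlym := SPAuxB.lym_nat (ℓ * k) (Sys.biUnion id) hanti
  have hsplit : ∑ A ∈ Sys.biUnion id, A.card.factorial * ((ℓ * k) - A.card).factorial
      = ∑ P ∈ Sys, ∑ A ∈ P, A.card.factorial * ((ℓ * k) - A.card).factorial :=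
    Finset.sum_biUnion hdisjSys
  have hinner : ∀ P ∈ Sys,
      fℓ ≤ ∑ A ∈ P, A.card.factorial * ((ℓ * k) - A.card).factorial ∧
      ((∑ A ∈ P, A.card.factorial * ((ℓ * k) - A.card).factorial) ≤ fℓ → ∀ A ∈ P, A.card = ℓ) := by
    intro P hP
    exact SPAux.convex_bound P (fun A => A.card) k ℓ (ℓ * k) hk hℓ rfl (hpart P hP).1
      (fun A hA => Finset.card_pos.mpr ((hpart P hP).2.1 A hA))
      (partition_sum_card (hpart P hP))
  have hNval : ((ℓ * k) - 1).choose (ℓ - 1) * fℓ = (ℓ * k).factorial := SPAuxB.Nval k ℓ hk hℓ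
  have hfℓpos : 0 < fℓ := by
    rw [hfℓ]
    exact Nat.mul_pos hk (Nat.mul_pos ℓ.factorial_pos ((ℓ * k) - ℓ).factorial_pos)
  have htot : ∑ P ∈ Sys, ∑ A ∈ P, A.card.factorial * ((ℓ * k) - A.card).factorial ≤ (ℓ * k).factorial := by
    rw [← hsplit]; exact hlym
  have hlow : Sys.card * fℓ ≤ ∑ P ∈ Sys, ∑ A ∈ P, A.card.factorial * ((ℓ * k) - A.card).factorial := by
    calc Sys.card * fℓ = ∑ _P ∈ Sys, fℓ := by rw [Finset.sum_const, smul_eq_mul]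
      _ ≤ _ := Finset.sum_le_sum (fun P hP => (hinner P hP).1)
  constructor
  · have h2 : Sys.card * fℓ ≤ ((ℓ * k) - 1).choose (ℓ - 1) * fℓ := by
      rw [hNval]; exact hlow.trans htot
    exact Nat.le_of_mul_le_mul_right h2 hfℓpos
  · intro hcard P hP A hA
    have hconst : ∑ _P ∈ Sys, fℓ = (ℓ * k).factorial := by
      rw [Finset.sum_const, smul_eq_mul, hcard, hNval]
    have hup : ∑ P ∈ Sys, ∑ A ∈ P, A.card.factorial * ((ℓ * k) - A.card).factorial
        ≤ ∑ _P ∈ Sys, fℓ := by rw [hconst]; exact htot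
    have hptwise : ∑ A ∈ P, A.card.factorial * ((ℓ * k) - A.card).factorial ≤ fℓ := by
      by_contra hcon
      push_neg at hcon
      have : ∑ _P ∈ Sys, fℓ < ∑ P ∈ Sys, ∑ A ∈ P, A.card.factorial * ((ℓ * k) - A.card).factorial :=
        Finset.sum_lt_sum (fun Q hQ => (hinner Q hQ).1) ⟨P, hP, hcon⟩
      omega
    exact (hinner P hP).2 hptwise A hA

end SPAuxD

theorem SP_divisible (k ℓ : ℕ) (hk : 1 ≤ k) (hℓ : 1 ≤ ℓ) :
    SP (ℓ * k) k = Nat.choose (ℓ * k - 1) (ℓ - 1) ∧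
    ∀ Sys : Finset (Finset (Finset (Fin (ℓ * k)))),
      IsSpernerPartitionSystem Finset.univ k Sys →
      Sys.card = Nat.choose (ℓ * k - 1) (ℓ - 1) →
      ∀ P ∈ Sys, ∀ A ∈ P, A.card = ℓ := by
  obtain ⟨Sys₀, hSys₀, hcard₀, _⟩ := SPAuxC.exists_good_system k ℓ hk hℓ
  have hmem : Nat.choose (ℓ * k - 1) (ℓ - 1) ∈ {m | ∃ Sys : Finset (Finset (Finset (Fin (ℓ * k)))),
      IsSpernerPartitionSystem Finset.univ k Sys ∧ Sys.card = m} := ⟨Sys₀, hSys₀, hcard₀⟩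
  have hub : ∀ m ∈ {m | ∃ Sys : Finset (Finset (Finset (Fin (ℓ * k)))),
      IsSpernerPartitionSystem Finset.univ k Sys ∧ Sys.card = m},
      m ≤ Nat.choose (ℓ * k - 1) (ℓ - 1) := by
    rintro m ⟨Sys, hS, rfl⟩
    exact (SPAuxD.upper_core k ℓ hk hℓ Sys hS).1
  constructor
  · apply le_antisymm
    · exact csSup_le ⟨_, hmem⟩ hub
    · exact le_csSup ⟨Nat.choose (ℓ * k - 1) (ℓ - 1), hub⟩ hmem
  · intro Sys hS hcard
    exact (SPAuxD.upper_core k ℓ hk hℓ Sys hS).2 hcard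
end

section
/- Let n, k, ℓ and r be integers with k ≥ 1, ℓ ≥ 1, n = ℓk + r and 0 ≤ r < k. Then SP(n, k) ≤ C(n, ℓ) / ((k - r) + r(ℓ+1)/(n-ℓ)), where C(n, ℓ) is the binomial coefficient (n choose ℓ). -/
open Finset

/-! ### Auxiliary lemmas -/

lemma choose_log_concave (n j : ℕ) :
    n.choose j * n.choose (j+2) ≤ n.choose (j+1) * n.choose (j+1) := by
  have h1 : n.choose (j+1) * (j+1) = n.choose j * (n - j) := Nat.choose_succ_right_eq n j
  have h2 : n.choose (j+2) * (j+2) = n.choose (j+1) * (n - (j+1)) :=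
    Nat.choose_succ_right_eq n (j+1)
  have key : n.choose j * n.choose (j+2) * ((j+1)*(j+2))
      ≤ n.choose (j+1) * n.choose (j+1) * ((j+1)*(j+2)) := by
    calc n.choose j * n.choose (j+2) * ((j+1)*(j+2))
        = n.choose j * (j+1) * (n.choose (j+2) * (j+2)) := by ring
      _ = n.choose j * (j+1) * (n.choose (j+1) * (n - (j+1))) := by rw [h2]
      _ = n.choose j * n.choose (j+1) * ((j+1) * (n - (j+1))) := by ring
      _ ≤ n.choose j * n.choose (j+1) * ((j+2) * (n - j)) := by
          refine Nat.mul_le_mul_left _ (Nat.mul_le_mul (Nat.le_succ _) ?_)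
          exact Nat.sub_le_sub_left (Nat.le_succ _) n
      _ = (n.choose j * (n - j)) * n.choose (j+1) * (j+2) := by ring
      _ = (n.choose (j+1) * (j+1)) * n.choose (j+1) * (j+2) := by rw [h1]
      _ = n.choose (j+1) * n.choose (j+1) * ((j+1)*(j+2)) := by ring
  exact Nat.le_of_mul_le_mul_right key (by positivity)

lemma choose_midpoint (n j : ℕ) (h : j + 2 ≤ n) :
    2 / (n.choose (j+1) : ℝ) ≤ 1 / (n.choose j : ℝ) + 1 / (n.choose (j+2) : ℝ) := by
  have hx : (0:ℝ) < n.choose j := by exact_mod_cast Nat.choose_pos (by omega)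
  have hy : (0:ℝ) < n.choose (j+2) := by exact_mod_cast Nat.choose_pos h
  have hc : (0:ℝ) < n.choose (j+1) := by exact_mod_cast Nat.choose_pos (by omega)
  have hlc : (n.choose j : ℝ) * n.choose (j+2) ≤ (n.choose (j+1) : ℝ) * n.choose (j+1) := by
    exact_mod_cast choose_log_concave n j
  set x := (n.choose j : ℝ)
  set y := (n.choose (j+2) : ℝ)
  set c := (n.choose (j+1) : ℝ)
  rw [div_add_div _ _ hx.ne' hy.ne', div_le_div_iff₀ hc (by positivity)]
  have hA : 0 ≤ (c*c - x*y) * (x+y)^2 := by nlinarith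
  have hB : 0 ≤ (x*y) * (x-y)^2 := by positivity
  have hpos : 0 < c*(x+y) + 2*(x*y) := by positivity
  nlinarith [hA, hB, hpos]

lemma choose_diff_mono (n : ℕ) {i j : ℕ} (hij : i ≤ j) (hj : j + 1 ≤ n) :
    1/(n.choose j : ℝ) - 1/(n.choose (j+1) : ℝ)
      ≤ 1/(n.choose i : ℝ) - 1/(n.choose (i+1) : ℝ) := by
  induction j, hij using Nat.le_induction with
  | base => exact le_rfl
  | succ m him ih =>
    have h1 := ih (by omega)
    have h2 := choose_midpoint n m (by omega)
    have e1 : (1:ℝ)/(n.choose (m+1)) - 1/(n.choose (m+1+1))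
        ≤ 1/(n.choose m) - 1/(n.choose (m+1)) := by
      have h2' : (2:ℝ)/(n.choose (m+1)) = 1/(n.choose (m+1)) + 1/(n.choose (m+1)) := by
        ring
      show (1:ℝ)/(n.choose (m+1)) - 1/(n.choose (m+2)) ≤ 1/(n.choose m) - 1/(n.choose (m+1))
      linarith
    linarith

lemma choose_secant (n ℓ a : ℕ) (hl : ℓ + 1 ≤ n) (ha : a ≤ n) :
    1/(n.choose ℓ : ℝ) + ((a:ℝ) - ℓ) * (1/(n.choose (ℓ+1) : ℝ) - 1/(n.choose ℓ : ℝ))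
      ≤ 1/(n.choose a : ℝ) := by
  rcases le_or_gt a ℓ with hle | hgt
  · -- downward direction
    have aux : ∀ m : ℕ, m ≤ ℓ →
        1/(n.choose ℓ : ℝ) + (m:ℝ) * (1/(n.choose ℓ : ℝ) - 1/(n.choose (ℓ+1) : ℝ))
          ≤ 1/(n.choose (ℓ - m) : ℝ) := by
      intro m
      induction m with
      | zero => intro _; simp
      | succ m ih =>
        intro hm
        have ihm := ih (by omega)
        have hidx : ℓ - (m+1) + 1 = ℓ - m := by omega
        have hmono := choose_diff_mono n (i := ℓ - (m+1)) (j := ℓ) (by omega) hl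
        rw [hidx] at hmono
        push_cast
        linarith
    have := aux (ℓ - a) (by omega)
    have hc : ((ℓ - a : ℕ) : ℝ) = (ℓ:ℝ) - a := by
      push_cast [Nat.cast_sub hle]; ring
    have hidx : ℓ - (ℓ - a) = a := by omega
    rw [hc, hidx] at this
    linarith
  · -- upward direction
    have aux : ∀ m : ℕ, ℓ + 1 + m ≤ n →
        1/(n.choose ℓ : ℝ) + ((m:ℝ)+1) * (1/(n.choose (ℓ+1) : ℝ) - 1/(n.choose ℓ : ℝ))
          ≤ 1/(n.choose (ℓ + 1 + m) : ℝ) := by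
      intro m
      induction m with
      | zero => intro _; norm_num
      | succ m ih =>
        intro hm
        have ihm := ih (by omega)
        have hmono := choose_diff_mono n (i := ℓ) (j := ℓ + 1 + m) (by omega) (by omega)
        have hidx : ℓ + 1 + m + 1 = ℓ + 1 + (m+1) := by omega
        rw [hidx] at hmono
        push_cast
        linarith
    have hm := aux (a - (ℓ+1)) (by omega)
    have hidx : ℓ + 1 + (a - (ℓ+1)) = a := by omega
    have hc : ((a - (ℓ+1) : ℕ) : ℝ) + 1 = (a:ℝ) - ℓ := by
      push_cast [Nat.cast_sub hgt]; ring
    rw [hidx, hc] at hm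
    linarith

lemma lym_sum {n : ℕ} (𝒜 : Finset (Finset (Fin n)))
    (h : IsAntichain (· ⊆ ·) (𝒜 : Set (Finset (Fin n)))) :
    ∑ A ∈ 𝒜, 1/(n.choose A.card : ℝ) ≤ 1 := by
  have hlym := Finset.sum_card_slice_div_choose_le_one (𝕜 := ℝ) h
  simp only [Fintype.card_fin] at hlym
  have hfib : ∑ A ∈ 𝒜, 1/(n.choose A.card : ℝ)
      = ∑ s ∈ Finset.range (n+1), ∑ A ∈ 𝒜.filter (fun A => A.card = s),
          1/(n.choose A.card : ℝ) := by
    refine (Finset.sum_fiberwise_of_maps_to ?_ _).symm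
    intro A hA
    simp only [Finset.mem_range]
    exact Nat.lt_succ_of_le (Finset.card_le_univ A |>.trans_eq (by simp))
  rw [hfib]
  refine le_trans (le_of_eq ?_) hlym
  refine Finset.sum_congr rfl fun s hs => ?_
  have : ∑ A ∈ 𝒜.filter (fun A => A.card = s), 1/(n.choose A.card : ℝ)
      = ∑ A ∈ 𝒜.filter (fun A => A.card = s), 1/(n.choose s : ℝ) := by
    refine Finset.sum_congr rfl fun A hA => ?_
    rw [(Finset.mem_filter.1 hA).2]
  have hsl : 𝒜.filter (fun A => A.card = s) = 𝒜 # s := by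
    ext A; simp [Finset.mem_slice]
  rw [this, hsl, Finset.sum_const, nsmul_eq_mul]
  ring

lemma partition_sum_card {n k : ℕ} {P : Finset (Finset (Fin n))}
    (hP : IsPartitionInto Finset.univ k P) : ∑ A ∈ P, A.card = n := by
  obtain ⟨hk, hne, hsub, huniq⟩ := hP
  have hdisj : ∀ A ∈ P, ∀ B ∈ P, A ≠ B → Disjoint A B := by
    intro A hA B hB hAB
    rw [Finset.disjoint_left]
    intro x hxA hxB
    obtain ⟨C, _, hCuniq⟩ := huniq x (Finset.mem_univ x)
    exact hAB ((hCuniq A ⟨hA, hxA⟩).trans (hCuniq B ⟨hB, hxB⟩).symm)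
  have hcover : P.biUnion id = Finset.univ := by
    apply Finset.eq_univ_of_forall
    intro x
    obtain ⟨A, ⟨hA, hxA⟩, _⟩ := huniq x (Finset.mem_univ x)
    exact Finset.mem_biUnion.2 ⟨A, hA, hxA⟩
  calc ∑ A ∈ P, A.card = (P.biUnion id).card := (Finset.card_biUnion hdisj).symm
    _ = n := by rw [hcover]; simp

lemma part_lower {n k ℓ r : ℕ} (hk : 1 ≤ k) (hℓ : 1 ≤ ℓ)
    (hn : n = ℓ * k + r) (hr : r < k) {P : Finset (Finset (Fin n))}
    (hP : IsPartitionInto Finset.univ k P) :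
    (((k : ℝ) - (r : ℝ)) + (r : ℝ) * ((ℓ : ℝ) + 1) / ((n : ℝ) - (ℓ : ℝ)))
      / (n.choose ℓ : ℝ) ≤ ∑ A ∈ P, 1/(n.choose A.card : ℝ) := by
  have hln : ℓ ≤ n := by
    calc ℓ = ℓ * 1 := (mul_one ℓ).symm
    _ ≤ ℓ * k := Nat.mul_le_mul_left ℓ hk
    _ ≤ n := by omega
  have hsumc := partition_sum_card hP
  obtain ⟨hkcard, hne, hsub, huniq⟩ := hP
  rcases eq_or_lt_of_le hln with heq | hlt
  · -- n = ℓ : then k = 1, r = 0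
    have hk1 : k = 1 := by nlinarith
    have hr0 : r = 0 := by omega
    obtain ⟨A, hA⟩ := Finset.card_eq_one.1 (hkcard.trans hk1)
    subst hA
    have hAcard : A.card = n := by simpa using hsumc
    subst heq
    simp [hAcard, hr0, hk1, Nat.choose_self]
  · -- ℓ + 1 ≤ n
    have hl1 : ℓ + 1 ≤ n := hlt
    set Δ : ℝ := 1/(n.choose (ℓ+1) : ℝ) - 1/(n.choose ℓ : ℝ) with hΔ
    have hstep : ∀ A ∈ P,
        1/(n.choose ℓ : ℝ) + ((A.card:ℝ) - ℓ) * Δ ≤ 1/(n.choose A.card : ℝ) := by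
      intro A hA
      exact choose_secant n ℓ A.card hl1 (Finset.card_le_univ A |>.trans_eq (by simp))
    have hsum := Finset.sum_le_sum hstep
    have hcast : (∑ A ∈ P, (A.card:ℝ)) = n := by
      rw [← Nat.cast_sum, hsumc]
    have hlhs : ∑ A ∈ P, (1/(n.choose ℓ : ℝ) + ((A.card:ℝ) - ℓ) * Δ)
        = (k:ℝ) * (1/(n.choose ℓ : ℝ)) + (r:ℝ) * Δ := by
      rw [Finset.sum_add_distrib, Finset.sum_const, hkcard, nsmul_eq_mul]
      have : ∑ A ∈ P, ((A.card:ℝ) - ℓ) * Δ = ((∑ A ∈ P, (A.card:ℝ)) - k * ℓ) * Δ := by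
        rw [← Finset.sum_mul, Finset.sum_sub_distrib, Finset.sum_const, hkcard, nsmul_eq_mul]
      rw [this, hcast]
      have : (n:ℝ) - (k:ℝ) * ℓ = r := by
        have : (n:ℝ) = ℓ * k + r := by exact_mod_cast congrArg (Nat.cast : ℕ → ℝ) hn
        linarith
      rw [this]
    rw [hlhs] at hsum
    refine le_trans (le_of_eq ?_) hsum
    -- identity : D / C(n,ℓ) = k/C(n,ℓ) + r * Δ
    have hid : (n.choose (ℓ+1) : ℝ) * ((ℓ:ℝ)+1) = (n.choose ℓ : ℝ) * ((n:ℝ) - ℓ) := by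
      have := Nat.choose_succ_right_eq n ℓ
      have hc : ((n - ℓ : ℕ) : ℝ) = (n:ℝ) - ℓ := by
        push_cast [Nat.cast_sub hln]; ring
      calc (n.choose (ℓ+1) : ℝ) * ((ℓ:ℝ)+1)
          = ((n.choose (ℓ+1) * (ℓ+1) : ℕ) : ℝ) := by push_cast; ring
        _ = ((n.choose ℓ * (n - ℓ) : ℕ) : ℝ) := by rw [this]
        _ = (n.choose ℓ : ℝ) * ((n:ℝ) - ℓ) := by push_cast [Nat.cast_sub hln]; ring
    have hC : (0:ℝ) < (n.choose ℓ : ℝ) := by exact_mod_cast Nat.choose_pos hln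
    have hC1 : (0:ℝ) < (n.choose (ℓ+1) : ℝ) := by exact_mod_cast Nat.choose_pos hl1
    have hnl : (0:ℝ) < (n:ℝ) - ℓ := by
      have : (ℓ:ℝ) < n := by exact_mod_cast hlt
      linarith
    have h1C : 1/((n.choose (ℓ+1)) : ℝ) = ((ℓ:ℝ)+1)/(((n:ℝ)-(ℓ:ℝ)) * (n.choose ℓ : ℝ)) := by
      rw [div_eq_div_iff hC1.ne' (by positivity : (0:ℝ) < ((n:ℝ)-(ℓ:ℝ)) * (n.choose ℓ : ℝ)).ne']
      linarith [hid]
    rw [hΔ, h1C]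
    field_simp
    ring

lemma sys_card_bound {n k ℓ r : ℕ} (hk : 1 ≤ k) (hℓ : 1 ≤ ℓ)
    (hn : n = ℓ * k + r) (hr : r < k) (Sys : Finset (Finset (Finset (Fin n))))
    (hS : IsSpernerPartitionSystem Finset.univ k Sys) :
    (Sys.card : ℝ) * (((k : ℝ) - (r : ℝ)) + (r : ℝ) * ((ℓ : ℝ) + 1) / ((n : ℝ) - (ℓ : ℝ)))
      ≤ (n.choose ℓ : ℝ) := by
  classical
  obtain ⟨hpart, hsp⟩ := hS
  have hln : ℓ ≤ n := by
    calc ℓ = ℓ * 1 := (mul_one ℓ).symm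
    _ ≤ ℓ * k := Nat.mul_le_mul_left ℓ hk
    _ ≤ n := by omega
  set 𝒜 := Sys.biUnion id with h𝒜
  have hanti : IsAntichain (· ⊆ ·) (𝒜 : Set (Finset (Fin n))) := by
    intro A hA B hB hne hsub
    obtain ⟨P, hP, hAP⟩ := Finset.mem_biUnion.1 (Finset.mem_coe.1 hA)
    obtain ⟨Q, hQ, hBQ⟩ := Finset.mem_biUnion.1 (Finset.mem_coe.1 hB)
    simp only [id] at hAP hBQ
    rcases eq_or_ne P Q with rfl | hPQ
    · obtain ⟨x, hx⟩ := (hpart P hP).2.1 A hAP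
      obtain ⟨C, _, hu⟩ := (hpart P hP).2.2.2 x (Finset.mem_univ x)
      exact hne ((hu A ⟨hAP, hx⟩).trans (hu B ⟨hBQ, hsub hx⟩).symm)
    · exact hsp P hP Q hQ hPQ A hAP B hBQ hsub
  have hdisj : (Sys : Set (Finset (Finset (Fin n)))).PairwiseDisjoint id := by
    intro P hP Q hQ hPQ
    simp only [Function.onFun, id]
    rw [Finset.disjoint_left]
    intro A hAP hAQ
    exact hsp P (Finset.mem_coe.1 hP) Q (Finset.mem_coe.1 hQ) hPQ A hAP A hAQ subset_rfl
  have hC : (0:ℝ) < (n.choose ℓ : ℝ) := by exact_mod_cast Nat.choose_pos hln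
  have hsplit : ∑ A ∈ 𝒜, 1/(n.choose A.card : ℝ)
      = ∑ P ∈ Sys, ∑ A ∈ P, 1/(n.choose A.card : ℝ) := Finset.sum_biUnion hdisj
  have hlym := lym_sum 𝒜 hanti
  have hlow : (Sys.card : ℝ) *
      ((((k : ℝ) - (r : ℝ)) + (r : ℝ) * ((ℓ : ℝ) + 1) / ((n : ℝ) - (ℓ : ℝ)))
        / (n.choose ℓ : ℝ)) ≤ ∑ P ∈ Sys, ∑ A ∈ P, 1/(n.choose A.card : ℝ) := by
    rw [← nsmul_eq_mul]
    exact Finset.card_nsmul_le_sum Sys _ _ fun P hP => part_lower hk hℓ hn hr (hpart P hP)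
  have : (Sys.card : ℝ) *
      ((((k : ℝ) - (r : ℝ)) + (r : ℝ) * ((ℓ : ℝ) + 1) / ((n : ℝ) - (ℓ : ℝ)))
        / (n.choose ℓ : ℝ)) ≤ 1 := by
    calc _ ≤ ∑ P ∈ Sys, ∑ A ∈ P, 1/(n.choose A.card : ℝ) := hlow
    _ = ∑ A ∈ 𝒜, 1/(n.choose A.card : ℝ) := hsplit.symm
    _ ≤ 1 := hlym
  rw [mul_div_assoc', div_le_one hC] at this
  exact this

theorem SP_general_upper (n k ℓ r : ℕ) (hk : 1 ≤ k) (hℓ : 1 ≤ ℓ)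
    (hn : n = ℓ * k + r) (hr : r < k) :
    (SP n k : ℝ) ≤ (Nat.choose n ℓ : ℝ) /
      (((k : ℝ) - (r : ℝ)) + (r : ℝ) * ((ℓ : ℝ) + 1) / ((n : ℝ) - (ℓ : ℝ))) := by
  classical
  have hln : ℓ ≤ n := by
    calc ℓ = ℓ * 1 := (mul_one ℓ).symm
    _ ≤ ℓ * k := Nat.mul_le_mul_left ℓ hk
    _ ≤ n := by omega
  have hD1 : (1:ℝ) ≤ ((k : ℝ) - (r : ℝ)) + (r : ℝ) * ((ℓ : ℝ) + 1) / ((n : ℝ) - (ℓ : ℝ)) := by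
    have h1 : (r:ℝ) + 1 ≤ k := by exact_mod_cast hr
    have h2 : (0:ℝ) ≤ (r : ℝ) * ((ℓ : ℝ) + 1) / ((n : ℝ) - (ℓ : ℝ)) := by
      apply div_nonneg (by positivity)
      have : (ℓ:ℝ) ≤ n := by exact_mod_cast hln
      linarith
    linarith
  have hDpos : (0:ℝ) < ((k : ℝ) - (r : ℝ)) + (r : ℝ) * ((ℓ : ℝ) + 1) / ((n : ℝ) - (ℓ : ℝ)) :=
    lt_of_lt_of_le one_pos hD1
  set S : Set ℕ := {m | ∃ Sys : Finset (Finset (Finset (Fin n))),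
    IsSpernerPartitionSystem Finset.univ k Sys ∧ Sys.card = m} with hSdef
  have hSne : S.Nonempty := ⟨0, ∅, ⟨by simp [IsPartitionInto], by simp⟩, by simp⟩
  have hbdd : BddAbove S := by
    refine ⟨n.choose ℓ, fun m hm => ?_⟩
    obtain ⟨Sys, hSys, rfl⟩ := hm
    have hb := sys_card_bound hk hℓ hn hr Sys hSys
    have : (Sys.card : ℝ) ≤ (n.choose ℓ : ℝ) :=
      le_trans (le_mul_of_one_le_right (by positivity) hD1) hb
    exact_mod_cast this
  have hmem : SP n k ∈ S := Nat.sSup_mem hSne hbdd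
  obtain ⟨Sys, hSys, hcard⟩ := hmem
  rw [le_div_iff₀ hDpos]
  rw [← hcard]
  exact sys_card_bound hk hℓ hn hr Sys hSys
end
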